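/- Counting good sets: let d ≥ 1, k ≥ 2, m ≥ k be integers with m > d, and let A_1, ..., A_n (n ≥ m) be subsets of some set such that every m-element subset of {1,...,n} contains a k-element subset K with ⋂_{i∈K} A_i ≠ ∅. Call a (d+1)-element subset I ⊆ {1,...,n} good if ⋂_{i∈I} A_i ≠ ∅. Then the number of good sets is at least C(k,d+1)·C(n,d+1)/C(m,d+1), where C(a,b) denotes the binomial coefficient. -/

import Mathlib

lemma count_supersets {ι : Type*} [DecidableEq ι] (V I : Finset ι) (m : ℕ)
    (hIV : I ⊆ V) (hm : I.card ≤ m) :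
    ((V.powersetCard m).filter (fun W => I ⊆ W)).card
      = (V.card - I.card).choose (m - I.card) := by
  rw [← Finset.card_sdiff_of_subset hIV, ← Finset.card_powersetCard]
  apply Finset.card_bij' (fun W _ => W \ I) (fun S _ => S ∪ I)
  · intro W hW
    simp only [Finset.mem_filter, Finset.mem_powersetCard] at hW ⊢
    obtain ⟨⟨hWV, hWc⟩, hIW⟩ := hW
    exact ⟨Finset.sdiff_subset_sdiff hWV le_rfl, by rw [Finset.card_sdiff_of_subset hIW, hWc]⟩
  · intro S hS
    simp only [Finset.mem_filter, Finset.mem_powersetCard] at hS ⊢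
    obtain ⟨hSV, hSc⟩ := hS
    have hdisj : Disjoint S I :=
      Finset.disjoint_left.2 fun x hx hxI => (Finset.mem_sdiff.1 (hSV hx)).2 hxI
    refine ⟨⟨Finset.union_subset (hSV.trans Finset.sdiff_subset) hIV, ?_⟩,
      Finset.subset_union_right⟩
    rw [Finset.card_union_of_disjoint hdisj, hSc]
    omega
  · intro W hW
    simp only [Finset.mem_filter] at hW
    exact Finset.sdiff_union_of_subset hW.2
  · intro S hS
    simp only [Finset.mem_powersetCard] at hS
    have hdisj : Disjoint S I :=
      Finset.disjoint_left.2 fun x hx hxI => (Finset.mem_sdiff.1 (hS.1 hx)).2 hxI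
    rw [Finset.union_sdiff_cancel_right hdisj]

theorem count_good_sets
    {ι : Type*} {α : Type*} (d k m : ℕ) (hd : 1 ≤ d) (hk : 2 ≤ k) (hkm : k ≤ m)
    (hmd : d < m)
    (V : Finset ι) (n : ℕ) (hn : V.card = n) (hnm : m ≤ n)
    (A : ι → Set α)
    (hagree : ∀ W ⊆ V, W.card = m →
      ∃ K ⊆ W, K.card = k ∧ (⋂ i ∈ K, A i).Nonempty) :
    ((k.choose (d + 1) : ℝ) * (n.choose (d + 1))) / (m.choose (d + 1))
      ≤ {I : Finset ι | I ⊆ V ∧ I.card = d + 1 ∧ (⋂ i ∈ I, A i).Nonempty}.ncard := by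
  classical
  set r := d + 1 with hr
  have hrm : r ≤ m := by omega
  set G : Finset (Finset ι) :=
    (V.powersetCard r).filter (fun I => (⋂ i ∈ I, A i).Nonempty) with hG
  have hset : {I : Finset ι | I ⊆ V ∧ I.card = r ∧ (⋂ i ∈ I, A i).Nonempty} = ↑G := by
    ext I
    simp [hG, Finset.mem_powersetCard, and_assoc]
  rw [hset, Set.ncard_coe_finset]
  -- key counting inequality
  have key : k.choose r * n.choose m ≤ G.card * (n - r).choose (m - r) := by
    have hsum : ∑ W ∈ V.powersetCard m, (G.filter (fun I => I ⊆ W)).card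
        = ∑ I ∈ G, ((V.powersetCard m).filter (fun W => I ⊆ W)).card := by
      simp only [Finset.card_filter]
      exact Finset.sum_comm
    have lower : k.choose r * n.choose m
        ≤ ∑ W ∈ V.powersetCard m, (G.filter (fun I => I ⊆ W)).card := by
      rw [← hn, ← Finset.card_powersetCard m V, mul_comm, ← Finset.sum_const_nat (m := k.choose r) (fun _ _ => rfl)]
      apply Finset.sum_le_sum
      intro W hW
      rw [Finset.mem_powersetCard] at hW
      obtain ⟨K, hKW, hKc, x, hx⟩ := hagree W hW.1 hW.2
      have hsub : K.powersetCard r ⊆ G.filter (fun I => I ⊆ W) := by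
        intro I hI
        rw [Finset.mem_powersetCard] at hI
        simp only [hG, Finset.mem_filter, Finset.mem_powersetCard]
        refine ⟨⟨⟨(hI.1.trans hKW).trans hW.1, hI.2⟩, x, ?_⟩, hI.1.trans hKW⟩
        simp only [Set.mem_iInter]
        intro i hiI
        simp only [Set.mem_iInter] at hx
        exact hx i (hI.1 hiI)
      calc k.choose r = (K.powersetCard r).card := by
            rw [Finset.card_powersetCard, hKc]
        _ ≤ _ := Finset.card_le_card hsub
    have upper : ∑ I ∈ G, ((V.powersetCard m).filter (fun W => I ⊆ W)).card
        = G.card * (n - r).choose (m - r) := by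
      rw [Finset.sum_congr rfl (fun I hI => ?_), Finset.sum_const, smul_eq_mul]
      simp only [hG, Finset.mem_filter, Finset.mem_powersetCard] at hI
      rw [count_supersets V I m hI.1.1 (by omega), hI.1.2, hn]
    exact lower.trans_eq (hsum.trans upper)
  have hpos : 0 < (n - r).choose (m - r) := Nat.choose_pos (by omega)
  have hnat : k.choose r * n.choose r * ((n - r).choose (m - r))
      ≤ G.card * m.choose r * ((n - r).choose (m - r)) := by
    calc k.choose r * n.choose r * ((n - r).choose (m - r))
        = k.choose r * (n.choose r * (n - r).choose (m - r)) := by ring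
      _ = k.choose r * (n.choose m * m.choose r) := by rw [Nat.choose_mul (n := n) hrm]
      _ = (k.choose r * n.choose m) * m.choose r := by ring
      _ ≤ (G.card * (n - r).choose (m - r)) * m.choose r := Nat.mul_le_mul_right _ key
      _ = G.card * m.choose r * ((n - r).choose (m - r)) := by ring
  have hfin : k.choose r * n.choose r ≤ G.card * m.choose r :=
    Nat.le_of_mul_le_mul_right hnat hpos
  have hmr : 0 < (m.choose r : ℝ) := by exact_mod_cast Nat.choose_pos hrm
  rw [div_le_iff₀ hmr]
  exact_mod_cast hfin
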